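/- For functors θ : C^n ⥤ C and θᵢ : C^{kᵢ} ⥤ C (i = 1,…,n), there is a natural isomorphism (θ ∘ (θ₁,…,θₙ))_D ≅ θ_D ∘ (θ₁_D, …, θₙ_D) between functors [C ⥤ Type]^{k₁+⋯+kₙ} ⥤ [C ⥤ Type], where ∘ denotes multi-composition of multi-ary functors. -/

import Mathlib

open CategoryTheory Opposite

universe u v

namespace DayPaper

variable {B C : Type} [SmallCategory B] [SmallCategory C]

/-- A point of the coend defining the Day extension (left Kan extension) of a
copresheaf `P` along `θ`, at `c`. -/
structure DayPt (θ : B ⥤ C) (P : B ⥤ Type) (c : C) : Type where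
  pt : B
  elt : P.obj pt
  arr : θ.obj pt ⟶ c

/-- The relation generating the coend quotient. -/
def DayRel (θ : B ⥤ C) (P : B ⥤ Type) (c : C) : DayPt θ P c → DayPt θ P c → Prop :=
  fun x y => ∃ f : x.pt ⟶ y.pt, P.map f x.elt = y.elt ∧ x.arr = θ.map f ≫ y.arr

/-- The coend `∫^{b} P(b) × Hom(θ b, c)`. -/
def DayObj (θ : B ⥤ C) (P : B ⥤ Type) (c : C) : Type := Quot (DayRel θ P c)

/-- The Day extension of a copresheaf `P` along `θ`, as a copresheaf on `C`. -/
def DayCopresheaf (θ : B ⥤ C) (P : B ⥤ Type) : C ⥤ Type where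
  obj c := DayObj θ P c
  map {c c'} g := TypeCat.ofHom (Quot.map (fun (x : DayPt θ P c) => (⟨x.pt, x.elt, x.arr ≫ g⟩ : DayPt θ P c'))
    (by rintro x y ⟨f, h1, h2⟩; exact ⟨f, h1, by dsimp; rw [h2, Category.assoc]⟩))
  map_id c := by
    ext (q : DayObj θ P c)
    induction q using Quot.ind with
    | _ x => exact congrArg (Quot.mk _) (by rcases x with ⟨b, p, a⟩; simp)
  map_comp {c c' c''} g g' := by
    ext (q : DayObj θ P c)
    induction q using Quot.ind with
    | _ x => exact congrArg (Quot.mk _) (by rcases x with ⟨b, p, a⟩; simp)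

/-- The Day extension, as a functor on copresheaf categories. -/
def DayExtGen (θ : B ⥤ C) : (B ⥤ Type) ⥤ (C ⥤ Type) where
  obj P := DayCopresheaf θ P
  map {P Q} η :=
    { app := fun c => TypeCat.ofHom (Quot.map
          (fun (x : DayPt θ P c) => (⟨x.pt, η.app x.pt x.elt, x.arr⟩ : DayPt θ Q c))
        (by
          rintro x y ⟨f, h1, h2⟩
          exact ⟨f, by dsimp; rw [← h1, FunctorToTypes.naturality], h2⟩))
      naturality := by
        intro c c' g
        ext (q : DayObj θ P c)
        induction q using Quot.ind with
        | _ x => rfl }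
  map_id P := by
    ext c (q : DayObj θ P c)
    induction q using Quot.ind with
    | _ x => rfl
  map_comp {P Q R} η η' := by
    ext c (q : DayObj θ P c)
    induction q using Quot.ind with
    | _ x => rfl

variable {ι : Type}

/-- The external product of a family of copresheaves. -/
def extProd (F : ι → (C ⥤ Type)) : (ι → C) ⥤ Type where
  obj x := ∀ i, (F i).obj (x i)
  map f := TypeCat.ofHom fun p => fun i => (F i).map (f i) (p i)
  map_id x := by ext p i; simp
  map_comp f g := by ext p i; simp

/-- The external product, as a functor. -/
def extProdFunctor (ι : Type) (C : Type) [SmallCategory C] :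
    (ι → (C ⥤ Type)) ⥤ ((ι → C) ⥤ Type) where
  obj := extProd
  map {F G} α :=
    { app := fun x => TypeCat.ofHom fun p => fun i => (α i).app (x i) (p i)
      naturality := by
        intro x y f
        ext p
        funext i
        exact NatTrans.naturality_apply (α i) (f i) (p i) }
  map_id F := by ext x p; rfl
  map_comp α β := by ext x p; rfl

/-- Reindexing of pi-categories along a map of index types. -/
def reindexPi {A : Type u} [Category.{v} A] {ι' ι : Type} (h : ι' → ι) :
    (ι → A) ⥤ (ι' → A) where
  obj x := fun i' => x (h i')
  map f := fun i' => f (h i')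
  map_id _x := rfl
  map_comp _f _g := rfl

/-- The tuple `(θ₁, …, θₙ)` of a family of multi-ary operations. -/
def tupleFunctor {κ : ι → Type} (θs : ∀ i, (κ i → C) ⥤ C) :
    ((Σ i, κ i) → C) ⥤ (ι → C) where
  obj x := fun i => (θs i).obj (fun s => x ⟨i, s⟩)
  map f := fun i => (θs i).map (fun s => f ⟨i, s⟩)
  map_id x := by funext i; exact (θs i).map_id _
  map_comp f g := by funext i; exact (θs i).map_comp _ _

/-- Multi-composition of multi-ary operations on `C`. -/
def mc {κ : ι → Type} (θ : (ι → C) ⥤ C) (θs : ∀ i, (κ i → C) ⥤ C) :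
    ((Σ i, κ i) → C) ⥤ C :=
  tupleFunctor θs ⋙ θ

/-- The Day extension of a (total) `ι`-ary operation. -/
def DayExtFunctor (θ : (ι → C) ⥤ C) : (ι → (C ⥤ Type)) ⥤ (C ⥤ Type) :=
  extProdFunctor ι C ⋙ DayExtGen θ

end DayPaper

open DayPaper CategoryTheory

namespace DayProof

open DayPaper CategoryTheory Relation

variable {C : Type} [SmallCategory C] {ι : Type}
  {κ : ι → Type} (θ : (ι → C) ⥤ C) (θs : ∀ i, (κ i → C) ⥤ C)
  (F : (Σ i, κ i) → (C ⥤ Type))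

theorem dayRel_refl {B : Type} [SmallCategory B] (θ' : B ⥤ C) (P : B ⥤ Type)
    (c : C) (x : DayPt θ' P c) : DayRel θ' P c x x :=
  ⟨𝟙 _, by simp, by simp⟩

/-- The family of inner copresheaves. -/
abbrev Fam (i : ι) : (κ i → C) ⥤ Type := extProd (fun s => F ⟨i, s⟩)

/-- Assembling a family of inner coend points into a point of the coend of
the multicomposite. -/
def asmPt {c : C} {p : ι → C} (g : ∀ i, DayPt (θs i) (Fam F i) (p i))
    (a : θ.obj p ⟶ c) : DayPt (mc θ θs) (extProd F) c where
  pt := fun js => (g js.1).pt js.2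
  elt := fun js => (g js.1).elt js.2
  arr := θ.map (show (fun i => (θs i).obj ((g i).pt)) ⟶ p from fun i => (g i).arr) ≫ a

def asm {c : C} {p : ι → C} (g : ∀ i, DayPt (θs i) (Fam F i) (p i))
    (a : θ.obj p ⟶ c) : DayObj (mc θ θs) (extProd F) c :=
  Quot.mk _ (asmPt θ θs F g a)

/-- The joint one-step relation on families of inner points. -/
def JRel (p : ι → C) (g g' : ∀ i, DayPt (θs i) (Fam F i) (p i)) : Prop :=
  ∀ i, DayRel (θs i) (Fam F i) (p i) (g i) (g' i)

theorem asm_eq_of_jrel {c : C} {p : ι → C}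
    {g g' : ∀ i, DayPt (θs i) (Fam F i) (p i)} (a : θ.obj p ⟶ c)
    (h : JRel θs F p g g') : asm θ θs F g a = asm θ θs F g' a := by
  choose f h1 h2 using h
  refine Quot.sound ⟨fun js => f js.1 js.2, ?_, ?_⟩
  · funext js
    exact congrFun (h1 js.1) js.2
  · show (θ.map fun i => (g i).arr) ≫ a = _
    have e : (fun i => (g i).arr)
        = ((tupleFunctor θs).map fun js => f js.1 js.2) ≫ (fun i => (g' i).arr) :=
      funext h2
    rw [e]
    erw [θ.map_comp, Category.assoc]
    rfl

theorem asm_eq_of_eqvGen [DecidableEq ι] [Fintype ι] {c : C} {p : ι → C}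
    {g g' : ∀ i, DayPt (θs i) (Fam F i) (p i)} (a : θ.obj p ⟶ c)
    (h : ∀ i, EqvGen (DayRel (θs i) (Fam F i) (p i)) (g i) (g' i)) :
    asm θ θs F g a = asm θ θs F g' a := by
  -- asm respects EqvGen of the joint relation
  have asmE : ∀ (x y : ∀ i, DayPt (θs i) (Fam F i) (p i)),
      EqvGen (JRel θs F p) x y → asm θ θs F x a = asm θ θs F y a := by
    intro x y hxy
    induction hxy with
    | rel _ _ hr => exact asm_eq_of_jrel θ θs F a hr
    | refl => rfl
    | symm _ _ _ ih => exact ih.symm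
    | trans _ _ _ _ _ ih1 ih2 => exact ih1.trans ih2
  refine asmE _ _ ?_
  -- updating a single coordinate
  have upd : ∀ (i0 : ι) (x y : DayPt (θs i0) (Fam F i0) (p i0)),
      EqvGen (DayRel (θs i0) (Fam F i0) (p i0)) x y →
      ∀ h : ∀ i, DayPt (θs i) (Fam F i) (p i),
        EqvGen (JRel θs F p) (Function.update h i0 x) (Function.update h i0 y) := by
    intro i0 x y hxy
    induction hxy with
    | rel u v hr =>
      intro h
      refine EqvGen.rel _ _ (fun j => ?_)
      by_cases hj : j = i0
      · subst hj
        simpa only [Function.update_self] using hr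
      · rw [Function.update_of_ne hj, Function.update_of_ne hj]
        exact dayRel_refl _ _ _ _
    | refl u => exact fun h => EqvGen.refl _
    | symm _ _ _ ih => exact fun h => (ih h).symm _ _
    | trans _ _ _ _ _ ih1 ih2 => exact fun h => (ih1 h).trans _ _ _ (ih2 h)
  -- change coordinates one at a time
  have key : ∀ T : Finset ι,
      EqvGen (JRel θs F p) g (fun i => if i ∈ T then g' i else g i) := by
    intro T
    induction T using Finset.induction with
    | empty => simpa using EqvGen.refl g
    | @insert i0 T hnm ih =>
      refine ih.trans _ _ _ ?_
      have e1 : (fun i => if i ∈ insert i0 T then g' i else g i)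
          = Function.update (fun i => if i ∈ T then g' i else g i) i0 (g' i0) := by
        funext i
        by_cases hi : i = i0
        · subst hi; simp [hnm]
        · simp [Function.update_of_ne hi, Finset.mem_insert, hi]
      have e2 : (fun i => if i ∈ T then g' i else g i)
          = Function.update (fun i => if i ∈ T then g' i else g i) i0 (g i0) := by
        funext i
        by_cases hi : i = i0
        · subst hi; simp [hnm]
        · simp [Function.update_of_ne hi]
      rw [e1]
      conv_lhs => rw [e2]
      exact upd i0 _ _ (h i0) _
  have := key Finset.univ
  simpa using this

/-- The family of inner Day copresheaves. -/
abbrev Gi (i : ι) : C ⥤ Type := DayCopresheaf (θs i) (Fam F i)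

/-- The forward comparison map on coend points. -/
def fwdPt {c : C} (x : DayPt (mc θ θs) (extProd F) c) :
    DayPt θ (extProd fun i => Gi θs F i) c where
  pt := fun i => (θs i).obj (fun s => x.pt ⟨i, s⟩)
  elt := fun i => Quot.mk _ ⟨fun s => x.pt ⟨i, s⟩, fun s => x.elt ⟨i, s⟩, 𝟙 _⟩
  arr := x.arr

theorem fwd_wd {c : C} (x y : DayPt (mc θ θs) (extProd F) c)
    (h : DayRel (mc θ θs) (extProd F) c x y) :
    Quot.mk (DayRel θ (extProd fun i => Gi θs F i) c) (fwdPt θ θs F x)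
      = Quot.mk (DayRel θ (extProd fun i => Gi θs F i) c) (fwdPt θ θs F y) := by
  obtain ⟨f, h1, h2⟩ := h
  refine Quot.sound ⟨fun i => (θs i).map (fun s => f ⟨i, s⟩), ?_, ?_⟩
  · funext i
    refine Quot.sound ⟨fun s => f ⟨i, s⟩, ?_, ?_⟩
    · funext s
      exact congrFun h1 ⟨i, s⟩
    · exact (Category.id_comp _).trans (Category.comp_id _).symm
  · exact h2

/-- The forward comparison map. -/
def fwd {c : C} : DayObj (mc θ θs) (extProd F) c → DayObj θ (extProd fun i => Gi θs F i) c :=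
  Quot.lift (fun x => Quot.mk _ (fwdPt θ θs F x)) (fwd_wd θ θs F)

theorem bwd_char [DecidableEq ι] [Fintype ι] {c : C} {p : ι → C}
    (g : ∀ i, DayPt (θs i) (Fam F i) (p i)) (q : ∀ i, DayObj (θs i) (Fam F i) (p i))
    (hq : ∀ i, q i = Quot.mk _ (g i)) (a : θ.obj p ⟶ c) :
    asm θ θs F (fun i => Quot.out (q i)) a = asm θ θs F g a :=
  asm_eq_of_eqvGen θ θs F a
    (fun i => Quot.eqvGen_exact ((Quot.out_eq (q i)).trans (hq i)))

theorem bwd_wd [DecidableEq ι] [Fintype ι] {c : C}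
    (x y : DayPt θ (extProd fun i => Gi θs F i) c)
    (h : DayRel θ (extProd fun i => Gi θs F i) c x y) :
    asm θ θs F (fun i => Quot.out (x.elt i)) x.arr
      = asm θ θs F (fun i => Quot.out (y.elt i)) y.arr := by
  obtain ⟨f, h1, h2⟩ := h
  have hy : ∀ i, y.elt i = Quot.mk _
      (⟨(Quot.out (x.elt i)).pt, (Quot.out (x.elt i)).elt,
        (Quot.out (x.elt i)).arr ≫ f i⟩ : DayPt (θs i) (Fam F i) (y.pt i)) := by
    intro i
    rw [← congrFun h1 i]
    show (Gi θs F i).map (f i) (x.elt i) = _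
    conv_lhs => rw [← Quot.out_eq (x.elt i)]
    rfl
  have e1 : asm θ θs F (fun i => Quot.out (x.elt i)) x.arr
      = asm θ θs F (fun i => ⟨(Quot.out (x.elt i)).pt, (Quot.out (x.elt i)).elt,
          (Quot.out (x.elt i)).arr ≫ f i⟩) y.arr := by
    refine Quot.sound ⟨𝟙 _, (FunctorToTypes.map_id_apply _ _).trans rfl, ?_⟩
    show θ.map (show (fun i => (θs i).obj ((Quot.out (x.elt i)).pt)) ⟶ x.pt
        from fun i => (Quot.out (x.elt i)).arr) ≫ x.arr = _
    refine (congrArg (θ.map _ ≫ ·) h2).trans ?_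
    refine (Category.assoc _ _ _).symm.trans ?_
    refine (congrArg (· ≫ y.arr) (θ.map_comp _ _).symm).trans ?_
    exact (Category.id_comp _).symm.trans (congrArg (· ≫ _) ((mc θ θs).map_id (asmPt θ θs F (fun i => Quot.out (x.elt i)) x.arr).pt).symm)
  rw [e1]
  exact (bwd_char θ θs F _ y.elt hy y.arr).symm

/-- The comparison equivalence on coend objects. -/
noncomputable def fwdEquiv [DecidableEq ι] [Fintype ι] (c : C) :
    DayObj (mc θ θs) (extProd F) c ≃ DayObj θ (extProd fun i => Gi θs F i) c where
  toFun := fwd θ θs F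
  invFun := Quot.lift (fun x => asm θ θs F (fun i => Quot.out (x.elt i)) x.arr)
    (bwd_wd θ θs F)
  left_inv := by
    intro q
    induction q using Quot.ind with
    | _ x =>
      show asm θ θs F (fun i => Quot.out ((fwdPt θ θs F x).elt i)) (fwdPt θ θs F x).arr
        = Quot.mk _ x
      refine (bwd_char θ θs F
        (fun i => ⟨fun s => x.pt ⟨i, s⟩, fun s => x.elt ⟨i, s⟩, 𝟙 _⟩)
        (fwdPt θ θs F x).elt (fun i => rfl) (fwdPt θ θs F x).arr).trans ?_
      refine Quot.sound ⟨𝟙 _, (FunctorToTypes.map_id_apply _ _).trans rfl, ?_⟩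
      show θ.map (𝟙 (fun i => (θs i).obj fun s => x.pt ⟨i, s⟩)) ≫ x.arr
          = (mc θ θs).map (𝟙 _) ≫ x.arr
      rw [θ.map_id, (mc θ θs).map_id]
      rfl
  right_inv := by
    intro q
    induction q using Quot.ind with
    | _ x =>
      show fwd θ θs F (asm θ θs F (fun i => Quot.out (x.elt i)) x.arr) = Quot.mk _ x
      refine Quot.sound ⟨fun i => (Quot.out (x.elt i) :
        DayPt (θs i) (Fam F i) (x.pt i)).arr, ?_, rfl⟩
      funext i
      conv_rhs => rw [← Quot.out_eq (x.elt i)]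
      exact congrArg (Quot.mk _) (by
        show (⟨(Quot.out (x.elt i)).pt, (Quot.out (x.elt i)).elt,
            𝟙 _ ≫ (Quot.out (x.elt i)).arr⟩ :
            DayPt (θs i) (Fam F i) (x.pt i)) = Quot.out (x.elt i)
        rw [Category.id_comp])

theorem fwd_nat {c c' : C} (h : c ⟶ c') (q : DayObj (mc θ θs) (extProd F) c) :
    fwd θ θs F ((DayCopresheaf (mc θ θs) (extProd F)).map h q)
      = (DayCopresheaf θ (extProd fun i => Gi θs F i)).map h (fwd θ θs F q) := by
  induction q using Quot.ind with
  | _ x => rfl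

theorem fwd_natF (F' : (Σ i, κ i) → (C ⥤ Type)) (η : ∀ js, F js ⟶ F' js) (c : C)
    (q : DayObj (mc θ θs) (extProd F) c) :
    fwd θ θs F' (((DayExtFunctor (mc θ θs)).map η).app c q)
      = (((Functor.pi' fun i => reindexPi (Sigma.mk i) ⋙ DayExtFunctor (θs i)) ⋙
          DayExtFunctor θ).map η).app c (fwd θ θs F q) := by
  induction q using Quot.ind with
  | _ x => rfl

/-- The comparison natural isomorphism. -/
noncomputable def dayIso [DecidableEq ι] [Fintype ι] :
    DayExtFunctor (mc θ θs) ≅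
      (Functor.pi' fun i => reindexPi (Sigma.mk i) ⋙ DayExtFunctor (θs i)) ⋙
        DayExtFunctor θ :=
  NatIso.ofComponents
    (fun F => NatIso.ofComponents
      (fun c => Equiv.toIso (fwdEquiv θ θs F c))
      (by
        intro c c' h
        ext q
        exact fwd_nat θ θs F h q))
    (by
      intro F F' η
      ext c q
      exact fwd_natF θ θs F F' η c q)

end DayProof


/-- For `θ : C^n ⥤ C` and `θᵢ : C^{kᵢ} ⥤ C`, the Day extension of the
multi-composite `θ ∘ (θ₁,…,θₙ)` is naturally isomorphic to the multi-composite
of the Day extensions, as functors `[C ⥤ Type]^{k₁+⋯+kₙ} ⥤ [C ⥤ Type]`. -/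
theorem dayExtension_multicomposite (C : Type) [SmallCategory C] (n : ℕ)
    (κ : Fin n → ℕ) (θ : (Fin n → C) ⥤ C) (θs : ∀ i, (Fin (κ i) → C) ⥤ C) :
    Nonempty (DayExtFunctor (mc θ θs) ≅
      (Functor.pi' fun i => reindexPi (Sigma.mk i) ⋙ DayExtFunctor (θs i)) ⋙
        DayExtFunctor θ) :=
  ⟨DayProof.dayIso θ θs⟩
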